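/- Let n ≥ 1, let Q be an n×n real symmetric positive definite matrix, let a_1, a_2, a_3, a_4 ∈ ℝ, and let A be the 4n×4n block matrix with block rows (0, I_n, 0, 0), (0, 0, I_n, 0), (0, 0, 0, I_n), (−a_1 Q, −a_2 Q, −a_3 Q, −a_4 Q). Then A is stable (every eigenvalue of A over ℂ has strictly negative real part) if and only if a_1 > 0, a_2 > 0, a_3 > 0, a_4 > 0, and for every eigenvalue λ of Q both (a_3 a_4 / a_2)·λ > 1 and ((a_3 a_4 / a_2) − (a_1 a_4² / a_2²))·λ > 1. -/

import Mathlib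

open Polynomial Complex Matrix Kronecker

local notation "conj'" => starRingEnd ℂ


/-- Block matrix with `k × k` blocks, each an `n × n` real matrix. -/
def Mblk {k n : ℕ} (B : Fin k → Fin k → Matrix (Fin n) (Fin n) ℝ) :
    Matrix (Fin k × Fin n) (Fin k × Fin n) ℝ :=
  Matrix.of fun x y => B x.1 y.1 x.2 y.2

open Polynomial Complex




/-- A real root of a quartic with positive coefficients is negative. -/
lemma RHneg_root (b0 b1 b2 b3 c : ℝ) (hb3 : 0 < b3) (hb2 : 0 < b2) (hb1 : 0 < b1)
    (hb0 : 0 < b0) (h : c^4 + b3*c^3 + b2*c^2 + b1*c + b0 = 0) : c < 0 := by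
  by_contra hc
  push_neg at hc
  nlinarith [pow_nonneg hc 4, pow_nonneg hc 3, pow_nonneg hc 2,
    mul_nonneg hb3.le (pow_nonneg hc 3), mul_nonneg hb2.le (pow_nonneg hc 2),
    mul_nonneg hb1.le hc]

lemma RHcaseA (b0 b1 b2 b3 c1 c2 c3 c4 : ℝ)
    (h3 : b3 = -(c1+c2+c3+c4))
    (h2 : b2 = c1*c2+c1*c3+c1*c4+c2*c3+c2*c4+c3*c4)
    (h1 : b1 = -(c1*c2*c3+c1*c2*c4+c1*c3*c4+c2*c3*c4))
    (h0 : b0 = c1*c2*c3*c4) :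
    (c1 < 0 ∧ c2 < 0 ∧ c3 < 0 ∧ c4 < 0) ↔
      (0 < b3 ∧ 0 < b2 ∧ 0 < b1 ∧ 0 < b0 ∧ b1^2 + b0*b3^2 < b1*b2*b3) := by
  subst h3 h2 h1 h0
  constructor
  · rintro ⟨hc1, hc2, hc3, hc4⟩
    refine ⟨by linarith, ?_, ?_, ?_, ?_⟩
    · nlinarith [mul_pos_of_neg_of_neg hc1 hc2, mul_pos_of_neg_of_neg hc1 hc3,
        mul_pos_of_neg_of_neg hc1 hc4, mul_pos_of_neg_of_neg hc2 hc3,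
        mul_pos_of_neg_of_neg hc2 hc4, mul_pos_of_neg_of_neg hc3 hc4]
    · nlinarith [mul_neg_of_pos_of_neg (mul_pos_of_neg_of_neg hc1 hc2) hc3,
        mul_neg_of_pos_of_neg (mul_pos_of_neg_of_neg hc1 hc2) hc4,
        mul_neg_of_pos_of_neg (mul_pos_of_neg_of_neg hc1 hc3) hc4,
        mul_neg_of_pos_of_neg (mul_pos_of_neg_of_neg hc2 hc3) hc4]
    · nlinarith [mul_pos (mul_pos_of_neg_of_neg hc1 hc2) (mul_pos_of_neg_of_neg hc3 hc4)]
    · have key :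
        (-(c1*c2*c3+c1*c2*c4+c1*c3*c4+c2*c3*c4)) *
          (c1*c2+c1*c3+c1*c4+c2*c3+c2*c4+c3*c4) * (-(c1+c2+c3+c4))
        - (-(c1*c2*c3+c1*c2*c4+c1*c3*c4+c2*c3*c4))^2
        - (c1*c2*c3*c4) * (-(c1+c2+c3+c4))^2
          = ((c1+c2)*(c3+c4)) * (((c1+c3)*(c2+c4)) * ((c1+c4)*(c2+c3))) := by ring
      have p1 : 0 < (c1+c2)*(c3+c4) := mul_pos_of_neg_of_neg (by linarith) (by linarith)
      have p2 : 0 < (c1+c3)*(c2+c4) := mul_pos_of_neg_of_neg (by linarith) (by linarith)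
      have p3 : 0 < (c1+c4)*(c2+c3) := mul_pos_of_neg_of_neg (by linarith) (by linarith)
      nlinarith [mul_pos p1 (mul_pos p2 p3)]
  · rintro ⟨hb3, hb2, hb1, hb0, _⟩
    refine ⟨?_, ?_, ?_, ?_⟩ <;>
      [ (apply RHneg_root _ _ _ _ c1 hb3 hb2 hb1 hb0);
        (apply RHneg_root _ _ _ _ c2 hb3 hb2 hb1 hb0);
        (apply RHneg_root _ _ _ _ c3 hb3 hb2 hb1 hb0);
        (apply RHneg_root _ _ _ _ c4 hb3 hb2 hb1 hb0)] <;> ring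

/-- roots are x±iy (y≠0), c, d -/
lemma RHcaseB (b0 b1 b2 b3 x y c d : ℝ) (hy : y ≠ 0)
    (h3 : b3 = -(2*x + c + d))
    (h2 : b2 = (x^2+y^2) + 2*x*c + 2*x*d + c*d)
    (h1 : b1 = -((x^2+y^2)*(c+d) + 2*x*(c*d)))
    (h0 : b0 = (x^2+y^2)*(c*d)) :
    (x < 0 ∧ c < 0 ∧ d < 0) ↔
      (0 < b3 ∧ 0 < b2 ∧ 0 < b1 ∧ 0 < b0 ∧ b1^2 + b0*b3^2 < b1*b2*b3) := by
  have hy2 : 0 < y^2 := by positivity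
  have key : b1*b2*b3 - b1^2 - b0*b3^2
      = (2*x*(c+d)) * (((x+c)^2+y^2) * ((x+d)^2+y^2)) := by
    subst h3 h2 h1 h0; ring
  constructor
  · rintro ⟨hx, hc, hd⟩
    have hm : 0 < x^2+y^2 := by positivity
    refine ⟨by linarith, ?_, ?_, ?_, ?_⟩
    · nlinarith [mul_pos_of_neg_of_neg hc hd, mul_pos_of_neg_of_neg hx hc,
        mul_pos_of_neg_of_neg hx hd]
    · nlinarith [mul_neg_of_pos_of_neg hm (show c+d < 0 by linarith),
        mul_neg_of_pos_of_neg (mul_pos_of_neg_of_neg hc hd) hx]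
    · nlinarith [mul_pos hm (mul_pos_of_neg_of_neg hc hd)]
    · have p1 : 0 < 2*x*(c+d) := by nlinarith
      have p2 : 0 < ((x+c)^2+y^2) * ((x+d)^2+y^2) := by positivity
      nlinarith [mul_pos p1 p2]
  · rintro ⟨hb3, hb2, hb1, hb0, hD⟩
    have hcneg : c < 0 := by
      apply RHneg_root b0 b1 b2 b3 c hb3 hb2 hb1 hb0
      subst h3 h2 h1 h0; ring
    have hdneg : d < 0 := by
      apply RHneg_root b0 b1 b2 b3 d hb3 hb2 hb1 hb0
      subst h3 h2 h1 h0; ring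
    have hM : 0 < ((x+c)^2+y^2) * ((x+d)^2+y^2) := by positivity
    have hfac : 0 < 2*x*(c+d) := by
      by_contra hle
      push_neg at hle
      nlinarith [mul_nonpos_of_nonpos_of_nonneg hle hM.le]
    refine ⟨by nlinarith, hcneg, hdneg⟩

/-- roots are x±iy (y≠0), u±iv (v≠0) -/
lemma RHcaseC (b0 b1 b2 b3 x y u v : ℝ) (hy : y ≠ 0) (hv : v ≠ 0)
    (h3 : b3 = -(2*x + 2*u))
    (h2 : b2 = (x^2+y^2) + (u^2+v^2) + 4*x*u)
    (h1 : b1 = -(2*u*(x^2+y^2) + 2*x*(u^2+v^2)))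
    (h0 : b0 = (x^2+y^2)*(u^2+v^2)) :
    (x < 0 ∧ u < 0) ↔
      (0 < b3 ∧ 0 < b2 ∧ 0 < b1 ∧ 0 < b0 ∧ b1^2 + b0*b3^2 < b1*b2*b3) := by
  have hy2 : 0 < y^2 := by positivity
  have hv2 : 0 < v^2 := by positivity
  have key : b1*b2*b3 - b1^2 - b0*b3^2
      = (4*x*u) * (((x+u)^2+(y+v)^2) * ((x+u)^2+(y-v)^2)) := by
    subst h3 h2 h1 h0; ring
  constructor
  · rintro ⟨hx, hu⟩
    have hmz : 0 < x^2+y^2 := by positivity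
    have hmw : 0 < u^2+v^2 := by positivity
    have hxu : 0 < x*u := mul_pos_of_neg_of_neg hx hu
    refine ⟨by linarith, by nlinarith, ?_, by nlinarith [mul_pos hmz hmw], ?_⟩
    · nlinarith [mul_neg_of_pos_of_neg hmz hu, mul_neg_of_pos_of_neg hmw hx]
    · have hsq : 0 < (x+u)^2 := by nlinarith
      have p2 : 0 < ((x+u)^2+(y+v)^2) * ((x+u)^2+(y-v)^2) :=
        mul_pos (by positivity) (by positivity)
      nlinarith [mul_pos (show (0:ℝ) < 4*x*u by linarith) p2]
  · rintro ⟨hb3, hb2, hb1, hb0, hD⟩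
    have hsum : x + u < 0 := by rw [h3] at hb3; linarith
    have hM : 0 < ((x+u)^2+(y+v)^2) * ((x+u)^2+(y-v)^2) := by
      have hsq : (0:ℝ) < (x+u)^2 := by nlinarith
      exact mul_pos (by linarith [sq_nonneg (y+v)]) (by linarith [sq_nonneg (y-v)])
    have hfac : 0 < 4*x*u := by
      by_contra hle
      push_neg at hle
      nlinarith [mul_nonpos_of_nonpos_of_nonneg hle hM.le]
    have hxu : 0 < x*u := by linarith
    rcases lt_or_ge x 0 with h | h
    · refine ⟨h, ?_⟩
      by_contra hu
      push_neg at hu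
      linarith [mul_nonpos_of_nonpos_of_nonneg h.le hu]
    · exfalso
      have hu : u < 0 := by linarith
      linarith [mul_nonpos_of_nonneg_of_nonpos h hu.le]




lemma multiset_card_eq_four {α : Type*} {s : Multiset α} :
    Multiset.card s = 4 ↔ ∃ a b c d, s = {a, b, c, d} := by
  constructor
  · intro h
    have hpos : 0 < Multiset.card s := by omega
    obtain ⟨a, ha⟩ := Multiset.card_pos_iff_exists_mem.mp hpos
    obtain ⟨t, rfl⟩ := Multiset.exists_cons_of_mem ha
    simp only [Multiset.card_cons] at h
    obtain ⟨b, c, d, rfl⟩ := Multiset.card_eq_three.mp (show Multiset.card t = 3 by omega)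
    exact ⟨a, b, c, d, rfl⟩
  · rintro ⟨a, b, c, d, rfl⟩
    rfl

lemma conj_decomp (s : Multiset ℂ) (hc : Multiset.card s = 4)
    (h : s.map (conj') = s) :
    (∃ c1 c2 c3 c4 : ℝ, s = {(c1:ℂ), (c2:ℂ), (c3:ℂ), (c4:ℂ)}) ∨
    (∃ (z : ℂ) (c d : ℝ), z.im ≠ 0 ∧ s = {z, conj' z, (c:ℂ), (d:ℂ)}) ∨
    (∃ z w : ℂ, z.im ≠ 0 ∧ w.im ≠ 0 ∧ s = {z, conj' z, w, conj' w}) := by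
  by_cases hall : ∀ z ∈ s, z.im = 0
  · left
    obtain ⟨a, b, c, d, rfl⟩ := multiset_card_eq_four.mp hc
    refine ⟨a.re, b.re, c.re, d.re, ?_⟩
    have ha : (a.re : ℂ) = a := Complex.ext (by simp) (by simp [hall a (by simp)])
    have hb : (b.re : ℂ) = b := Complex.ext (by simp) (by simp [hall b (by simp)])
    have hc' : (c.re : ℂ) = c := Complex.ext (by simp) (by simp [hall c (by simp)])
    have hd : (d.re : ℂ) = d := Complex.ext (by simp) (by simp [hall d (by simp)])
    rw [ha, hb, hc', hd]
  · push_neg at hall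
    obtain ⟨z, hzs, hz⟩ := hall
    have hzc : conj' z ∈ s := by
      rw [← h]; exact Multiset.mem_map_of_mem _ hzs
    have hne : conj' z ≠ z := by
      intro he
      apply hz
      have := congrArg Complex.im he
      simp at this
      linarith
    obtain ⟨t0, ht0⟩ := Multiset.exists_cons_of_mem hzs
    have hzc' : conj' z ∈ t0 := by
      have := hzc
      rw [ht0] at this
      rcases Multiset.mem_cons.mp this with h' | h'
      · exact absurd h' hne
      · exact h'
    obtain ⟨t, ht⟩ := Multiset.exists_cons_of_mem hzc'
    have hs : s = z ::ₘ conj' z ::ₘ t := by rw [ht0, ht]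
    have htconj : t.map conj' = t := by
      have h2 : (z ::ₘ conj' z ::ₘ t).map conj' = z ::ₘ conj' z ::ₘ t := by
        rw [← hs, h]
      simp only [Multiset.map_cons, Complex.conj_conj] at h2
      rw [Multiset.cons_swap] at h2
      exact (Multiset.cons_inj_right _).mp ((Multiset.cons_inj_right _).mp h2)
    have htcard : Multiset.card t = 2 := by
      have := hc
      rw [hs] at this
      simpa using this
    obtain ⟨u, v, rfl⟩ := Multiset.card_eq_two.mp htcard
    have huv : (conj' u) ::ₘ {conj' v} = u ::ₘ {v} := by
      simpa using htconj
    by_cases hu : u.im = 0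
    · right; left
      have hcu : conj' u = u := Complex.conj_eq_iff_im.mpr hu
      have hv : conj' v = v := by
        rw [hcu] at huv
        have := (Multiset.cons_inj_right u).mp huv
        simpa using this
      refine ⟨z, u.re, v.re, hz, ?_⟩
      have hu' : (u.re : ℂ) = u := Complex.ext (by simp) (by simp [hu])
      have hv' : (v.re : ℂ) = v := Complex.ext (by simp) (by simp [Complex.conj_eq_iff_im.mp hv])
      rw [hs, hu', hv']
      rfl
    · right; right
      have hcu : conj' u ≠ u := fun he => hu (by have := congrArg Complex.im he; simp at this; linarith)
      have hmem : conj' u ∈ (u ::ₘ {v} : Multiset ℂ) := by rw [← huv]; simp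
      have : conj' u = v := by
        rcases Multiset.mem_cons.mp hmem with h' | h'
        · exact absurd h' hcu
        · simpa using h'
      refine ⟨z, u, hz, hu, ?_⟩
      rw [hs, ← this]
      rfl




lemma quartic_coeff_eq (p3 p2 p1 p0 q3 q2 q1 q0 : ℂ)
    (h : (X:ℂ[X])^4 + C p3*X^3 + C p2*X^2 + C p1*X + C p0
       = X^4 + C q3*X^3 + C q2*X^2 + C q1*X + C q0) :
    p3 = q3 ∧ p2 = q2 ∧ p1 = q1 ∧ p0 = q0 := by
  refine ⟨?_, ?_, ?_, ?_⟩
  · have := congrArg (fun p => Polynomial.coeff p 3) h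
    simpa [coeff_X_pow] using this
  · have := congrArg (fun p => Polynomial.coeff p 2) h
    simpa [coeff_X_pow] using this
  · have := congrArg (fun p => Polynomial.coeff p 1) h
    simpa [coeff_X_pow] using this
  · have := congrArg (fun p => Polynomial.coeff p 0) h
    simpa [coeff_X_pow] using this

lemma pair_expand (z : ℂ) :
    ((X:ℂ[X]) - C z) * (X - C (conj' z))
      = X^2 - C ((2*z.re : ℝ):ℂ)*X + C ((z.re^2+z.im^2 : ℝ):ℂ) := by
  have h1 : ((2*z.re : ℝ):ℂ) = z + conj' z := by rw [Complex.add_conj]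
  have h2 : ((z.re^2+z.im^2 : ℝ):ℂ) = z * conj' z := by
    rw [Complex.mul_conj, Complex.normSq_apply]; push_cast; ring
  rw [h1, h2, Polynomial.C_add, Polynomial.C_mul]; ring

lemma real_pair_expand (c d : ℝ) :
    ((X:ℂ[X]) - C ((c:ℝ):ℂ)) * (X - C ((d:ℝ):ℂ))
      = X^2 - C ((c+d : ℝ):ℂ)*X + C ((c*d : ℝ):ℂ) := by
  push_cast
  simp only [Polynomial.C_add, Polynomial.C_mul]
  ring

lemma quad_mul (s1 p1 s2 p2 : ℝ) :
    ((X:ℂ[X])^2 - C (s1:ℂ)*X + C (p1:ℂ)) * (X^2 - C (s2:ℂ)*X + C (p2:ℂ))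
      = X^4 + C ((-(s1+s2) : ℝ):ℂ)*X^3 + C ((p1+p2+s1*s2 : ℝ):ℂ)*X^2
        + C ((-(s1*p2+s2*p1) : ℝ):ℂ)*X + C ((p1*p2 : ℝ):ℂ) := by
  push_cast
  simp only [Polynomial.C_add, Polynomial.C_mul, Polynomial.C_neg]
  ring





lemma RH_quartic (b0 b1 b2 b3 : ℝ) :
    (∀ μ ∈ ((X^4 + C b3*X^3 + C b2*X^2 + C b1*X + C b0 : Polynomial ℝ).map
        Complex.ofRealHom).roots, μ.re < 0) ↔
    (0 < b3 ∧ 0 < b2 ∧ 0 < b1 ∧ 0 < b0 ∧ b1^2 + b0*b3^2 < b1*b2*b3) := by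
  have hmap : (X^4 + C b3*X^3 + C b2*X^2 + C b1*X + C b0 : Polynomial ℝ).map Complex.ofRealHom
      = X^4 + C ((b3:ℝ):ℂ)*X^3 + C ((b2:ℝ):ℂ)*X^2 + C ((b1:ℝ):ℂ)*X + C ((b0:ℝ):ℂ) := by
    simp [Polynomial.map_add, Polynomial.map_mul, Polynomial.map_pow]
  set q : Polynomial ℂ := X^4 + C ((b3:ℝ):ℂ)*X^3 + C ((b2:ℝ):ℂ)*X^2 + C ((b1:ℝ):ℂ)*X
      + C ((b0:ℝ):ℂ) with hqdef
  have hmonic : q.Monic := by rw [hqdef]; monicity!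
  have hdeg : q.natDegree = 4 := by rw [hqdef]; compute_degree!
  have hsplits : q.Splits := IsAlgClosed.splits q
  have hcard : Multiset.card q.roots = 4 := by
    rw [← hdeg]; exact Polynomial.splits_iff_card_roots.mp hsplits
  have hconj : q.roots.map conj' = q.roots := by
    have hqc : q.map conj' = q := by
      rw [hqdef]
      simp [Polynomial.map_add, Polynomial.map_mul, Polynomial.map_pow, Polynomial.map_C,
        Complex.conj_ofReal]
    conv_rhs => rw [← hqc, hsplits.roots_map _]
  have hfact : q = (q.roots.map fun a => X - C a).prod :=
    hsplits.eq_prod_roots_of_monic hmonic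
  rw [hmap]
  rcases conj_decomp q.roots hcard hconj with ⟨c1,c2,c3,c4,hroots⟩ |
    ⟨z,c,d,hz,hroots⟩ | ⟨z,w,hz,hw,hroots⟩
  · have hfact' : q = ((X:Polynomial ℂ)^2 - C ((c1+c2:ℝ):ℂ)*X + C ((c1*c2:ℝ):ℂ)) *
        ((X:Polynomial ℂ)^2 - C ((c3+c4:ℝ):ℂ)*X + C ((c3*c4:ℝ):ℂ)) := by
      rw [hfact, hroots]
      simp only [Multiset.insert_eq_cons, Multiset.map_cons, Multiset.map_singleton,
        Multiset.prod_cons, Multiset.prod_singleton]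
      rw [← real_pair_expand c1 c2, ← real_pair_expand c3 c4]
      ring
    rw [quad_mul] at hfact'
    obtain ⟨e3, e2, e1, e0⟩ := quartic_coeff_eq _ _ _ _ _ _ _ _ (hqdef.symm.trans hfact')
    rw [Complex.ofReal_inj] at e3 e2 e1 e0
    rw [hroots]
    simp only [Multiset.insert_eq_cons, Multiset.mem_cons, Multiset.mem_singleton,
      forall_eq_or_imp, forall_eq, Complex.ofReal_re]
    exact RHcaseA b0 b1 b2 b3 c1 c2 c3 c4 (by rw [e3]; try ring) (by rw [e2]; try ring)
      (by rw [e1]; try ring) (by rw [e0]; try ring)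
  · have hfact' : q = ((X:Polynomial ℂ)^2 - C ((2*z.re:ℝ):ℂ)*X + C ((z.re^2+z.im^2:ℝ):ℂ)) *
        ((X:Polynomial ℂ)^2 - C ((c+d:ℝ):ℂ)*X + C ((c*d:ℝ):ℂ)) := by
      rw [hfact, hroots]
      simp only [Multiset.insert_eq_cons, Multiset.map_cons, Multiset.map_singleton,
        Multiset.prod_cons, Multiset.prod_singleton]
      rw [← pair_expand z, ← real_pair_expand c d]
      ring
    rw [quad_mul] at hfact'
    obtain ⟨e3, e2, e1, e0⟩ := quartic_coeff_eq _ _ _ _ _ _ _ _ (hqdef.symm.trans hfact')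
    rw [Complex.ofReal_inj] at e3 e2 e1 e0
    rw [hroots]
    simp only [Multiset.insert_eq_cons, Multiset.mem_cons, Multiset.mem_singleton,
      forall_eq_or_imp, forall_eq, Complex.ofReal_re, Complex.conj_re]
    have HI := RHcaseB b0 b1 b2 b3 z.re z.im c d hz (by rw [e3]; try ring) (by rw [e2]; try ring)
      (by rw [e1]; try ring) (by rw [e0]; try ring)
    constructor
    · rintro ⟨h1', h2', h3', h4'⟩; exact HI.mp ⟨h1', h3', h4'⟩
    · intro h'
      obtain ⟨p1', p2', p3'⟩ := HI.mpr h'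
      exact ⟨p1', p1', p2', p3'⟩
  · have hfact' : q = ((X:Polynomial ℂ)^2 - C ((2*z.re:ℝ):ℂ)*X + C ((z.re^2+z.im^2:ℝ):ℂ)) *
        ((X:Polynomial ℂ)^2 - C ((2*w.re:ℝ):ℂ)*X + C ((w.re^2+w.im^2:ℝ):ℂ)) := by
      rw [hfact, hroots]
      simp only [Multiset.insert_eq_cons, Multiset.map_cons, Multiset.map_singleton,
        Multiset.prod_cons, Multiset.prod_singleton]
      rw [← pair_expand z, ← pair_expand w]
      ring
    rw [quad_mul] at hfact'
    obtain ⟨e3, e2, e1, e0⟩ := quartic_coeff_eq _ _ _ _ _ _ _ _ (hqdef.symm.trans hfact')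
    rw [Complex.ofReal_inj] at e3 e2 e1 e0
    rw [hroots]
    simp only [Multiset.insert_eq_cons, Multiset.mem_cons, Multiset.mem_singleton,
      forall_eq_or_imp, forall_eq, Complex.ofReal_re, Complex.conj_re]
    have HI := RHcaseC b0 b1 b2 b3 z.re z.im w.re w.im hz hw (by rw [e3]; try ring)
      (by rw [e2]; try ring) (by rw [e1]; try ring) (by rw [e0]; try ring)
    constructor
    · rintro ⟨h1', h2', h3', h4'⟩; exact HI.mp ⟨h1', h3'⟩
    · intro h'
      obtain ⟨p1', p2'⟩ := HI.mpr h'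
      exact ⟨p1', p1', p2', p2'⟩


variable {n : Type*} [Fintype n] [DecidableEq n] {R : Type*} [CommRing R]

lemma charpoly_conj_eq (U V M : Matrix n n R) (hUV : U * V = 1) (hVU : V * U = 1) :
    (V * M * U).charpoly = M.charpoly := by
  have hch : charmatrix (V * M * U) = (V.map C) * charmatrix M * (U.map C) := by
    unfold charmatrix
    have hmm : ((C : R →+* R[X]).mapMatrix (V * M * U) : Matrix n n R[X])
        = (V.map C) * ((C : R →+* R[X]).mapMatrix M) * (U.map C) := by
      simp [RingHom.mapMatrix_apply, Matrix.map_mul]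
    rw [hmm]
    rw [Matrix.mul_sub, Matrix.sub_mul]
    congr 1
    rw [mul_assoc, scalar_commute (X : R[X]) (Commute.all X) (U.map C)]
    rw [← mul_assoc]
    rw [← Matrix.map_mul, hVU]
    simp
  unfold Matrix.charpoly
  rw [hch, Matrix.det_mul, Matrix.det_mul]
  have : (V.map C).det * (U.map C).det = 1 := by
    rw [← Matrix.det_mul, ← Matrix.map_mul, hVU]
    simp
  ring_nf
  calc (V.map C).det * (charmatrix M).det * (U.map C).det
      = ((V.map C).det * (U.map C).det) * (charmatrix M).det := by ring
    _ = (charmatrix M).det := by rw [this, one_mul]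

lemma charpoly_blockDiagonal {o : Type*} [Fintype o] [DecidableEq o]
    (M : o → Matrix n n R) :
    (Matrix.blockDiagonal M).charpoly = ∏ i, (M i).charpoly := by
  unfold Matrix.charpoly
  have h : charmatrix (Matrix.blockDiagonal M)
      = Matrix.blockDiagonal (fun i => charmatrix (M i)) := by
    ext ⟨i, k⟩ ⟨j, l⟩
    simp only [charmatrix_apply, Matrix.blockDiagonal_apply, RingHom.mapMatrix_apply,
      Matrix.map_apply, Matrix.diagonal_apply, Prod.mk.injEq, Matrix.sub_apply,
      charmatrix, Matrix.scalar_apply]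
    by_cases hkl : k = l <;> by_cases hij : i = j <;>
      simp [hkl, hij, Matrix.blockDiagonal_apply, Matrix.diagonal_apply]
  rw [h, Matrix.det_blockDiagonal]


variable (a₁ a₂ a₃ a₄ : ℝ)

/-- shift part -/
def Smat : Matrix (Fin 4) (Fin 4) ℝ := !![0,1,0,0; 0,0,1,0; 0,0,0,1; 0,0,0,0]

/-- gains part -/
def Tmat (a₁ a₂ a₃ a₄ : ℝ) : Matrix (Fin 4) (Fin 4) ℝ :=
  !![0,0,0,0; 0,0,0,0; 0,0,0,0; -a₁,-a₂,-a₃,-a₄]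

/-- the 4×4 companion-type matrix for eigenvalue l -/
def Cmat (a₁ a₂ a₃ a₄ l : ℝ) : Matrix (Fin 4) (Fin 4) ℝ :=
  Matrix.of fun i j => Smat i j + Tmat a₁ a₂ a₃ a₄ i j * l

lemma charpoly_Cmat (l : ℝ) :
    (Cmat a₁ a₂ a₃ a₄ l).charpoly
      = X^4 + C (a₄*l)*X^3 + C (a₃*l)*X^2 + C (a₂*l)*X + C (a₁*l) := by
  set_option maxHeartbeats 1000000 in
  have hcm : (Cmat a₁ a₂ a₃ a₄ l).charmatrix =
      !![X, -1, 0, 0; 0, X, -1, 0; 0, 0, X, -1;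
         C (a₁*l), C (a₂*l), C (a₃*l), X + C (a₄*l)] := by
    ext i j
    fin_cases i <;> fin_cases j <;>
      simp [charmatrix_apply, Matrix.diagonal_apply, Cmat, Smat, Tmat, Matrix.vecHead, Matrix.vecTail]
  unfold Matrix.charpoly
  rw [hcm]
  set_option maxHeartbeats 1000000 in
  simp [Matrix.det_succ_row_zero, Fin.sum_univ_succ, Fin.succAbove]
  ring

lemma Mblk_eq_kron {n : ℕ} (Q : Matrix (Fin n) (Fin n) ℝ) :
    Mblk ![![0, 1, 0, 0], ![0, 0, 1, 0], ![0, 0, 0, 1],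
        ![-(a₁ • Q), -(a₂ • Q), -(a₃ • Q), -(a₄ • Q)]]
      = Smat ⊗ₖ (1 : Matrix (Fin n) (Fin n) ℝ) + (Tmat a₁ a₂ a₃ a₄) ⊗ₖ Q := by
  ext ⟨i, x⟩ ⟨j, y⟩
  fin_cases i <;> fin_cases j <;>
    simp [Mblk, Smat, Tmat, Matrix.kroneckerMap_apply, Matrix.one_apply,
      Matrix.vecHead, Matrix.vecTail]

lemma kron_diag_eq_blockDiagonal {n : ℕ} (d : Fin n → ℝ) :
    Smat ⊗ₖ (1 : Matrix (Fin n) (Fin n) ℝ) + (Tmat a₁ a₂ a₃ a₄) ⊗ₖ (Matrix.diagonal d)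
      = Matrix.blockDiagonal (fun x : Fin n => Cmat a₁ a₂ a₃ a₄ (d x)) := by
  ext ⟨i, x⟩ ⟨j, y⟩
  by_cases hxy : x = y <;>
    simp [Matrix.kroneckerMap_apply, Matrix.one_apply, Matrix.diagonal_apply,
      Matrix.blockDiagonal_apply, Cmat, hxy]

lemma final_iff_lemma (a₁ a₂ a₃ a₄ l : ℝ) (hl : 0 < l) (h1 : 0 < a₁) (h2 : 0 < a₂)
    (h3 : 0 < a₃) (h4 : 0 < a₄) :
    ((a₂*l)^2 + (a₁*l)*(a₄*l)^2 < (a₂*l)*(a₃*l)*(a₄*l)) ↔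
      (1 < (a₃*a₄/a₂)*l ∧ 1 < ((a₃*a₄/a₂) - a₁*a₄^2/a₂^2)*l) := by
  have key : a₂^2*l^2 * (((a₃*a₄/a₂) - a₁*a₄^2/a₂^2)*l - 1)
      = (a₂*l)*(a₃*l)*(a₄*l) - ((a₂*l)^2 + (a₁*l)*(a₄*l)^2) := by
    field_simp
    ring
  have hpos : 0 < a₂^2*l^2 := by positivity
  have hterm : 0 < a₁*a₄^2/a₂^2*l := by positivity
  have hsplit : (a₃*a₄/a₂)*l = (((a₃*a₄/a₂) - a₁*a₄^2/a₂^2)*l) + (a₁*a₄^2/a₂^2*l) := by ring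
  constructor
  · intro h
    have hgt : 0 < ((a₃*a₄/a₂) - a₁*a₄^2/a₂^2)*l - 1 := by nlinarith
    exact ⟨by linarith, by linarith⟩
  · rintro ⟨hga, hgb⟩
    nlinarith [mul_pos hpos (show (0:ℝ) < ((a₃*a₄/a₂) - a₁*a₄^2/a₂^2)*l - 1 by linarith)]

lemma pos_of_mul_pos_right' (a b : ℝ) (h : 0 < a * b) (hb : 0 < b) : 0 < a := by
  by_contra ha
  push_neg at ha
  nlinarith

/-- Fourth-order stability: the block matrix with rows `(0, I, 0, 0)`,
`(0, 0, I, 0)`, `(0, 0, 0, I)`, `(-a₁Q, -a₂Q, -a₃Q, -a₄Q)` is stable iff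
`a₁, a₂, a₃, a₄ > 0` and, for every eigenvalue `λ` of `Q`,
`(a₃a₄/a₂)·λ > 1` and `((a₃a₄/a₂) − (a₁a₄²/a₂²))·λ > 1`. -/
theorem fourthOrder_stable_iff (n : ℕ) (hn : 1 ≤ n)
    (Q : Matrix (Fin n) (Fin n) ℝ) (hQ : Q.PosDef) (a₁ a₂ a₃ a₄ : ℝ) :
    (∀ μ ∈ (((Mblk ![![0, 1, 0, 0], ![0, 0, 1, 0], ![0, 0, 0, 1],
        ![-(a₁ • Q), -(a₂ • Q), -(a₃ • Q), -(a₄ • Q)]]).map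
        Complex.ofReal).charpoly).roots, μ.re < 0) ↔
      (0 < a₁ ∧ 0 < a₂ ∧ 0 < a₃ ∧ 0 < a₄ ∧
        ∀ lam ∈ Q.charpoly.roots,
          1 < (a₃ * a₄ / a₂) * lam ∧
          1 < ((a₃ * a₄ / a₂) - (a₁ * a₄ ^ 2 / a₂ ^ 2)) * lam) := by
  classical
  have hH : Q.IsHermitian := hQ.1
  set U₀ : Matrix (Fin n) (Fin n) ℝ := (hH.eigenvectorUnitary : Matrix (Fin n) (Fin n) ℝ)
    with hU
  set d : Fin n → ℝ := hH.eigenvalues with hd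
  have hD : star U₀ * Q * U₀ = Matrix.diagonal d := by
    simpa using hH.conjStarAlgAut_star_eigenvectorUnitary
  have h1 : U₀ * star U₀ = 1 := Matrix.mem_unitaryGroup_iff.mp hH.eigenvectorUnitary.2
  have h2 : star U₀ * U₀ = 1 := Matrix.mem_unitaryGroup_iff'.mp hH.eigenvectorUnitary.2
  have hdpos : ∀ i, 0 < d i := hQ.eigenvalues_pos
  set A : Matrix (Fin 4 × Fin n) (Fin 4 × Fin n) ℝ :=
    Mblk ![![0, 1, 0, 0], ![0, 0, 1, 0], ![0, 0, 0, 1],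
      ![-(a₁ • Q), -(a₂ • Q), -(a₃ • Q), -(a₄ • Q)]] with hA
  set W : Matrix (Fin 4 × Fin n) (Fin 4 × Fin n) ℝ :=
    (1 : Matrix (Fin 4) (Fin 4) ℝ) ⊗ₖ U₀ with hWdef
  set V : Matrix (Fin 4 × Fin n) (Fin 4 × Fin n) ℝ :=
    (1 : Matrix (Fin 4) (Fin 4) ℝ) ⊗ₖ (star U₀) with hVdef
  have hWV : W * V = 1 := by
    rw [hWdef, hVdef, ← Matrix.mul_kronecker_mul, Matrix.mul_one, h1,
      Matrix.one_kronecker_one]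
  have hVW : V * W = 1 := by
    rw [hWdef, hVdef, ← Matrix.mul_kronecker_mul, Matrix.mul_one, h2,
      Matrix.one_kronecker_one]
  have hconjA : V * A * W = Matrix.blockDiagonal (fun i => Cmat a₁ a₂ a₃ a₄ (d i)) := by
    rw [hA, Mblk_eq_kron, Matrix.mul_add, Matrix.add_mul, hVdef, hWdef]
    have e1 : ((1 : Matrix (Fin 4) (Fin 4) ℝ) ⊗ₖ (star U₀)) * (Smat ⊗ₖ 1) *
        ((1 : Matrix (Fin 4) (Fin 4) ℝ) ⊗ₖ U₀) = Smat ⊗ₖ (1 : Matrix (Fin n) (Fin n) ℝ) := by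
      rw [← Matrix.mul_kronecker_mul, ← Matrix.mul_kronecker_mul]
      simp only [Matrix.one_mul, Matrix.mul_one]
      rw [h2]
    have e2 : ((1 : Matrix (Fin 4) (Fin 4) ℝ) ⊗ₖ (star U₀)) * ((Tmat a₁ a₂ a₃ a₄) ⊗ₖ Q) *
        ((1 : Matrix (Fin 4) (Fin 4) ℝ) ⊗ₖ U₀) = (Tmat a₁ a₂ a₃ a₄) ⊗ₖ (Matrix.diagonal d) := by
      rw [← Matrix.mul_kronecker_mul, ← Matrix.mul_kronecker_mul]
      simp only [Matrix.one_mul, Matrix.mul_one]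
      rw [hD]
    rw [e1, e2, kron_diag_eq_blockDiagonal]
  have hcharA : A.charpoly = ∏ i : Fin n,
      (X^4 + C (a₄*(d i))*X^3 + C (a₃*(d i))*X^2 + C (a₂*(d i))*X + C (a₁*(d i))) := by
    rw [← charpoly_conj_eq W V A hWV hVW, hconjA, charpoly_blockDiagonal]
    exact Finset.prod_congr rfl fun i _ => charpoly_Cmat a₁ a₂ a₃ a₄ (d i)
  have hmapA : (A.map Complex.ofReal).charpoly = A.charpoly.map Complex.ofRealHom :=
    Matrix.charpoly_map A Complex.ofRealHom
  have hq_ne : ∀ i : Fin n,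
      ((X^4 + C (a₄*(d i))*X^3 + C (a₃*(d i))*X^2 + C (a₂*(d i))*X + C (a₁*(d i)) :
        Polynomial ℝ).map Complex.ofRealHom) ≠ 0 := by
    intro i
    apply Polynomial.Monic.ne_zero
    apply Polynomial.Monic.map
    monicity!
  have hQchar : Q.charpoly = ∏ i : Fin n, (X - C (d i)) := by
    rw [← charpoly_conj_eq U₀ (star U₀) Q h1 h2, hD,
      Matrix.charpoly_of_upperTriangular (Matrix.diagonal d)
        (Matrix.blockTriangular_diagonal d)]
    exact Finset.prod_congr rfl fun i _ => by rw [Matrix.diagonal_apply_eq]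
  rw [hmapA, hcharA, Polynomial.map_prod,
    Polynomial.roots_prod _ _ (Finset.prod_ne_zero_iff.mpr fun i _ => hq_ne i),
    hQchar, Polynomial.roots_prod _ _
      (Finset.prod_ne_zero_iff.mpr fun i _ => X_sub_C_ne_zero (d i))]
  have keyL : (∀ μ ∈ (Finset.univ.val.bind fun i : Fin n =>
        (((X^4 + C (a₄*(d i))*X^3 + C (a₃*(d i))*X^2 + C (a₂*(d i))*X + C (a₁*(d i)) :
          Polynomial ℝ)).map Complex.ofRealHom).roots), μ.re < 0)
      ↔ ∀ i : Fin n, (0 < a₄*d i ∧ 0 < a₃*d i ∧ 0 < a₂*d i ∧ 0 < a₁*d i ∧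
          (a₂*d i)^2 + (a₁*d i)*(a₄*d i)^2 < (a₂*d i)*(a₃*d i)*(a₄*d i)) := by
    constructor
    · intro hL i
      exact (RH_quartic (a₁*d i) (a₂*d i) (a₃*d i) (a₄*d i)).mp
        (fun μ hμ => hL μ (Multiset.mem_bind.mpr ⟨i, by simp, hμ⟩))
    · intro hR μ hμ
      obtain ⟨i, _, hμi⟩ := Multiset.mem_bind.mp hμ
      exact (RH_quartic (a₁*d i) (a₂*d i) (a₃*d i) (a₄*d i)).mpr (hR i) μ hμi
  rw [keyL]
  have hmem : ∀ lam : ℝ, (lam ∈ Finset.univ.val.bind fun i : Fin n =>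
      ((X : Polynomial ℝ) - C (d i)).roots) ↔ ∃ i, d i = lam := by
    intro lam
    constructor
    · intro hmem'
      obtain ⟨i, _, hi⟩ := Multiset.mem_bind.mp hmem'
      rw [Polynomial.roots_X_sub_C] at hi
      exact ⟨i, (Multiset.mem_singleton.mp hi).symm⟩
    · rintro ⟨i, rfl⟩
      exact Multiset.mem_bind.mpr ⟨i, by simp, by simp [Polynomial.roots_X_sub_C]⟩
  constructor
  · intro hL
    have i0 : Fin n := ⟨0, hn⟩
    obtain ⟨p4, p3, p2, p1, _⟩ := hL i0
    have ha₄ : 0 < a₄ := pos_of_mul_pos_right' a₄ (d i0) p4 (hdpos i0)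
    have ha₃ : 0 < a₃ := pos_of_mul_pos_right' a₃ (d i0) p3 (hdpos i0)
    have ha₂ : 0 < a₂ := pos_of_mul_pos_right' a₂ (d i0) p2 (hdpos i0)
    have ha₁ : 0 < a₁ := pos_of_mul_pos_right' a₁ (d i0) p1 (hdpos i0)
    refine ⟨ha₁, ha₂, ha₃, ha₄, ?_⟩
    intro lam hlam
    obtain ⟨i, hi⟩ := (hmem lam).mp hlam
    subst hi
    exact (final_iff_lemma a₁ a₂ a₃ a₄ (d i) (hdpos i) ha₁ ha₂ ha₃ ha₄).mp (hL i).2.2.2.2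
  · rintro ⟨ha₁, ha₂, ha₃, ha₄, hIneq⟩
    intro i
    have hl := hdpos i
    refine ⟨by positivity, by positivity, by positivity, by positivity, ?_⟩
    exact (final_iff_lemma a₁ a₂ a₃ a₄ (d i) hl ha₁ ha₂ ha₃ ha₄).mpr
      (hIneq (d i) ((hmem (d i)).mpr ⟨i, rfl⟩))
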